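/- A connected R-full cell complex of rank R is closed if and only if it is graph-based and (R+1)-regular, i.e., every vertex is contained in exactly R+1 edges. -/

import Mathlib

open scoped Classical

universe u v

/-- Underlying data of a combinatorial cell complex: a finite collection of
finite subsets of a vertex type `V` (the cells) together with a rank function. -/
structure Precc (V : Type u) where
  cells : Finset (Finset V)
  rk : Finset V → ℕ

namespace Precc

variable {V : Type u} [DecidableEq V] [Fintype V]

/-- The axioms of a combinatorial cell complex (cc): cells are nonempty, every
vertex of a cell is a (rank 0) cell, rank-0 cells are exactly the singletons,
rank is strictly monotone, cells are closed under nonempty intersections, ranks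
have no gaps, and the diamond property. -/
def IsCC (K : Precc V) : Prop :=
  (∀ x ∈ K.cells, x.Nonempty) ∧
  (∀ x ∈ K.cells, ∀ a ∈ x, ({a} : Finset V) ∈ K.cells) ∧
  (∀ x ∈ K.cells, (K.rk x = 0 ↔ x.card = 1)) ∧
  (∀ x ∈ K.cells, ∀ y ∈ K.cells, x ⊂ y → K.rk x < K.rk y) ∧
  (∀ x ∈ K.cells, ∀ y ∈ K.cells, x ∩ y = ∅ ∨ x ∩ y ∈ K.cells) ∧
  (∀ x ∈ K.cells, ∀ y ∈ K.cells, x ⊂ y →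
    ∃ z ∈ K.cells, x ⊂ z ∧ z ⊆ y ∧ K.rk z = K.rk x + 1) ∧
  (∀ x ∈ K.cells, ∀ y ∈ K.cells, x ⊆ y → K.rk y = K.rk x + 2 →
    ∃ z₁ ∈ K.cells, ∃ z₂ ∈ K.cells, z₁ ≠ z₂ ∧
      ∀ z ∈ K.cells, ((x ⊆ z ∧ z ⊆ y ∧ K.rk z = K.rk x + 1) ↔ (z = z₁ ∨ z = z₂)))

/-- The set of cofaces of a cell. -/
noncomputable def cface (K : Precc V) (x : Finset V) : Finset (Finset V) :=
  K.cells.filter fun y => x ⊆ y ∧ K.rk y = K.rk x + 1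

/-- The set of faces of a cell. -/
noncomputable def face (K : Precc V) (x : Finset V) : Finset (Finset V) :=
  K.cells.filter fun y => y ⊆ x ∧ K.rk y + 1 = K.rk x

/-- The rank (dimension) of the complex. -/
def Rk (K : Precc V) : ℕ := K.cells.sup K.rk

/-- The set of cells of a given rank. -/
noncomputable def cellsOfRank (K : Precc V) (r : ℕ) : Finset (Finset V) :=
  K.cells.filter fun x => K.rk x = r

/-- The dual set of a set of vertices: the maximal cells containing it. -/
noncomputable def dualSet (K : Precc V) (A : Finset V) : Finset (Finset V) :=
  (K.cellsOfRank K.Rk).filter fun z => A ⊆ z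

/-- A cc is pure if every maximal cell has maximal rank. -/
def Pure (K : Precc V) : Prop :=
  ∀ x ∈ K.cells, (∀ y ∈ K.cells, ¬ x ⊂ y) → K.rk x = K.Rk

/-- A cc is graph-based if every edge (1-cell) has exactly two vertices. -/
def GraphBased (K : Precc V) : Prop :=
  ∀ e ∈ K.cells, K.rk e = 1 → e.card = 2

/-- Non-branching: every sub-maximal cell lies in at most two maximal cells. -/
def NonBranching (K : Precc V) : Prop :=
  ∀ y ∈ K.cells, K.rk y + 1 = K.Rk → (K.dualSet y).card ≤ 2

def NonSingular (K : Precc V) : Prop :=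
  K.GraphBased ∧ K.Pure ∧ K.NonBranching

/-- Closed: non-singular and every sub-maximal cell lies in exactly two
maximal cells. -/
def Closed (K : Precc V) : Prop :=
  K.NonSingular ∧ ∀ y ∈ K.cells, K.rk y + 1 = K.Rk → (K.dualSet y).card = 2

/-- Cells of the boundary: cells contained in a sub-maximal cell lying in
exactly one maximal cell. -/
noncomputable def bdryCells (K : Precc V) : Finset (Finset V) :=
  K.cells.filter fun x =>
    ∃ y ∈ K.cells, x ⊆ y ∧ K.rk y + 1 = K.Rk ∧ (K.dualSet y).card = 1

/-- The boundary complex. -/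
noncomputable def boundary (K : Precc V) : Precc V :=
  ⟨K.bdryCells, K.rk⟩

/-- The dual complex of a (pure) cc, with rank of the dual cell of `x` equal
to `Rk K - rk x` (encoded intrinsically via the intersection of the dual set). -/
noncomputable def dual (K : Precc V) : Precc (Finset V) :=
  ⟨K.cells.image K.dualSet, fun A => K.Rk - K.rk (A.inf id)⟩

/-- The barycentric subdivision: cells are nonempty chains of cells of `K`. -/
noncomputable def bdiv (K : Precc V) : Precc (Finset V) :=
  ⟨K.cells.powerset.filter fun c => c.Nonempty ∧ ∀ x ∈ c, ∀ y ∈ c, x ⊆ y ∨ y ⊆ x,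
   fun c => c.card - 1⟩

/-- Isomorphism of (pre)cell complexes: a rank-preserving bijection between the
cell sets preserving and reflecting inclusions. -/
def IsIso {A : Type u} {B : Type v} (K : Precc A) (L : Precc B) : Prop :=
  ∃ f : Finset A → Finset B,
    Set.BijOn f ↑K.cells ↑L.cells ∧
    (∀ x ∈ K.cells, ∀ y ∈ K.cells, (x ⊆ y ↔ f x ⊆ f y)) ∧
    (∀ x ∈ K.cells, L.rk (f x) = K.rk x)

/-- Adjacency of two vertices via an edge of `K`. -/
def EdgeRel (K : Precc V) (a b : V) : Prop :=
  ({a, b} : Finset V) ∈ K.cells ∧ K.rk ({a, b} : Finset V) = 1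

/-- Connectedness of a cc: graph-based, and the 1-skeleton is connected. -/
def Connected (K : Precc V) : Prop :=
  K.GraphBased ∧ ∀ a b : V, ({a} : Finset V) ∈ K.cells → ({b} : Finset V) ∈ K.cells →
    Relation.ReflTransGen K.EdgeRel a b

/-- Cell-connectedness: the 1-skeleton of every cell is connected. -/
def CellConnected (K : Precc V) : Prop :=
  K.GraphBased ∧ ∀ x ∈ K.cells, ∀ a ∈ x, ∀ b ∈ x,
    Relation.ReflTransGen (fun s t => s ∈ x ∧ t ∈ x ∧ K.EdgeRel s t) a b

/-- A local cc: connected and cell-connected. -/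
def LocalCC (K : Precc V) : Prop := K.Connected ∧ K.CellConnected

/-- The vertex set of a cc. -/
noncomputable def vertices (K : Precc V) : Finset V :=
  Finset.univ.filter fun a => ({a} : Finset V) ∈ K.cells

/-- `J` is a sub-cell complex of `K`. -/
def Subcomplex (J K : Precc V) : Prop :=
  J.cells ⊆ K.cells ∧ ∀ x ∈ J.cells, J.rk x = K.rk x

/-- The edges of `K` containing a given vertex. -/
noncomputable def EdgesAt (K : Precc V) (a : V) : Finset (Finset V) :=
  K.cells.filter fun e => K.rk e = 1 ∧ a ∈ e

/-- The edges of `K` at a vertex `a` that are contained in a cell `x`. -/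
noncomputable def edgesIn (K : Precc V) (a : V) (x : Finset V) : Finset (Finset V) :=
  (K.EdgesAt a).filter fun e => e ⊆ x

/-- `r`-fullness: every set of `j` edges at a vertex (`2 ≤ j ≤ r`) is the set of
edges at that vertex of some `j`-cell. -/
def RFull (K : Precc V) (r : ℕ) : Prop :=
  ∀ a : V, ({a} : Finset V) ∈ K.cells → ∀ j : ℕ, 2 ≤ j → j ≤ r →
    ∀ S ⊆ K.EdgesAt a, S.card = j →
      ∃ x ∈ K.cells, K.rk x = j ∧ K.edgesIn a x = S

/-- Fullness (= 2-fullness). -/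
def Full (K : Precc V) : Prop := K.RFull 2

/-- `n`-regularity: every vertex lies in exactly `n` edges. -/
def Regular (K : Precc V) (n : ℕ) : Prop :=
  ∀ a ∈ K.vertices, (K.EdgesAt a).card = n

/-- `m`-edge-regularity: every edge lies in exactly `m` 2-cells. -/
def EdgeRegular (K : Precc V) (m : ℕ) : Prop :=
  ∀ e ∈ K.cells, K.rk e = 1 → ((K.cellsOfRank 2).filter fun C => e ⊆ C).card = m

/-- Simplicial complex: every nonempty subset of a cell is a cell. -/
def Simplicial (K : Precc V) : Prop :=
  ∀ x ∈ K.cells, ∀ y : Finset V, y ⊆ x → y.Nonempty → y ∈ K.cells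

/-- Adjacency in the dual graph: two distinct maximal cells meeting along an
interior sub-maximal cell. -/
def DualAdj (K : Precc V) (z z' : Finset V) : Prop :=
  z ∈ K.cellsOfRank K.Rk ∧ z' ∈ K.cellsOfRank K.Rk ∧ z ≠ z' ∧
  ∃ y ∈ K.cells, K.rk y + 1 = K.Rk ∧ y ⊆ z ∧ y ⊆ z' ∧ (K.dualSet y).card = 2

/-- A pinch: a cell whose set of containing maximal cells induces a
disconnected subgraph of the dual graph. -/
def IsPinch (K : Precc V) (x : Finset V) : Prop :=
  ¬ ∀ z ∈ K.dualSet x, ∀ z' ∈ K.dualSet x,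
      Relation.ReflTransGen
        (fun a b => a ∈ K.dualSet x ∧ b ∈ K.dualSet x ∧ K.DualAdj a b) z z'

/-- Non-pinching: no `K`-pinch and no `∂K`-pinch. -/
def NonPinching (K : Precc V) : Prop :=
  (∀ x ∈ K.cells, ¬ K.IsPinch x) ∧ (∀ x ∈ K.boundary.cells, ¬ K.boundary.IsPinch x)

/-- The Euler characteristic. -/
noncomputable def chi (K : Precc V) : ℤ :=
  ∑ r ∈ Finset.range (K.Rk + 1), (-1 : ℤ) ^ r * ((K.cellsOfRank r).card : ℤ)

/-- Restriction of `K` to the cells contained in `A`. -/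
noncomputable def restrict (K : Precc V) (A : Finset V) : Precc V :=
  ⟨K.cells.filter fun x => x ⊆ A, K.rk⟩

/-- A shelling of a (non-singular) cc: for rank 0 the trivial order on the one
point, for rank ≥ 1 a linear order of the facets such that the boundary of the
first facet has a shelling and each facet meets the previous ones in a
non-singular complex of rank one less that has a shelling completable into a
shelling of the boundary of the facet, with the boundary conditions of
Definition 4.9 of the paper (see `IsShelling` below).
The intersection of the `k`-th facet with the union of the previous ones,
as a subcomplex of `K`. -/
noncomputable def interComplex (K : Precc V) (L : List (Finset V)) (k : ℕ)
    (hk : k < L.length) : Precc V :=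
  K.restrict (L.get ⟨k, hk⟩ ∩ (L.take k).foldr (· ∪ ·) ∅)

set_option maxHeartbeats 1000000 in
inductive IsShelling : Precc V → List (Finset V) → Prop where
  | point (K : Precc V) (x : Finset V) (hx : K.cells = {x}) (h0 : K.rk x = 0) :
      IsShelling K [x]
  | step (K : Precc V) (L : List (Finset V)) (L₀ : List (Finset V))
      (S S' : ℕ → List (Finset V))
      (hR : 1 ≤ K.Rk) (hnd : L.Nodup) (hne : L ≠ [])
      (henum : L.toFinset = K.cellsOfRank K.Rk)
      (hfirst : IsShelling ((K.restrict L.headI).boundary) L₀)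
      (hS : ∀ (k : ℕ) (hk : k < L.length), 0 < k →
        IsShelling (K.interComplex L k hk) (S k))
      (hS' : ∀ (k : ℕ) (hk : k < L.length), 0 < k →
        IsShelling ((K.restrict (L.get ⟨k, hk⟩)).boundary) (S' k))
      (hpre : ∀ (k : ℕ), k < L.length → 0 < k → S k <+: S' k)
      (hns : ∀ (k : ℕ) (hk : k < L.length), 0 < k →
        (K.interComplex L k hk).NonSingular ∧
        (K.interComplex L k hk).Rk + 1 = K.Rk ∧
        (k < L.length - 1 → (K.interComplex L k hk).bdryCells.Nonempty) ∧
        ((K.interComplex L k hk).bdryCells = ∅ →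
          k = L.length - 1 ∧ K.Closed ∧
          (K.interComplex L k hk).cells = ((K.restrict (L.get ⟨k, hk⟩)).boundary).cells)) :
      IsShelling K L

/-- A shellable cc. -/
def Shellable (K : Precc V) : Prop :=
  K.NonSingular ∧ ∃ L : List (Finset V), IsShelling K L

/-- The connection relation: `∇^a_b e = f`, i.e. `f` is the edge at `b`
associated to the edge `e` at `a` via the unique 2-cell containing `e` and the
edge `{a,b}` (and `{a,b}` is sent to itself). -/
def ConnRel (K : Precc V) (a b : V) (e f : Finset V) : Prop :=
  (e = ({a, b} : Finset V) ∧ f = ({a, b} : Finset V)) ∨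
  (e ≠ ({a, b} : Finset V) ∧ f ≠ ({a, b} : Finset V) ∧
    e ∈ K.cells ∧ f ∈ K.cells ∧ K.rk e = 1 ∧ K.rk f = 1 ∧ a ∈ e ∧ b ∈ f ∧
    ∃ C ∈ K.cells, K.rk C = 2 ∧ e ⊆ C ∧ ({a, b} : Finset V) ⊆ C ∧ f ⊆ C)

/-- `C` is a connected component of a 2-cell of `K`. -/
def IsComponentOfTwoCell (K : Precc V) (C : Finset V) : Prop :=
  ∃ C₀ ∈ K.cells, K.rk C₀ = 2 ∧ C ⊆ C₀ ∧ C.Nonempty ∧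
    (∀ e ∈ K.cells, K.rk e = 1 → e ⊆ C₀ → (e ∩ C).Nonempty → e ⊆ C) ∧
    (∀ a ∈ C, ∀ b ∈ C,
      Relation.ReflTransGen (fun s t => s ∈ C ∧ t ∈ C ∧ K.EdgeRel s t) a b)

/-- `c` is a cyclic enumeration of the vertex set `C` along edges of `K`. -/
def IsCycleOf (K : Precc V) (C : Finset V) (c : List V) : Prop :=
  c ≠ [] ∧ c.Nodup ∧ c.toFinset = C ∧
  ∀ a : V, c.head? = some a → List.Chain' K.EdgeRel (c ++ [a])

/-- A path in the 1-skeleton, recorded by its list of visited vertices. -/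
def IsPathList (K : Precc V) (l : List V) : Prop :=
  l ≠ [] ∧ List.Chain' K.EdgeRel l

/-- Transport of edges along a path via the connection. -/
inductive Transport (K : Precc V) : List V → Finset V → Finset V → Prop where
  | single (a : V) (e : Finset V) : Transport K [a] e e
  | cons {a b : V} {l : List V} {e f g : Finset V} :
      ConnRel K a b e f → Transport K (b :: l) f g → Transport K (a :: b :: l) e g

/-- `p` and `p'` are the two complementary arcs of the boundary cycle of the
2-cell component `C`, with the same endpoints. -/
def ComplementaryArcs (K : Precc V) (C : Finset V) (p p' : List V) : Prop :=
  p ≠ [] ∧ p' ≠ [] ∧ p.head? = p'.head? ∧ p.getLast? = p'.getLast? ∧ p.Nodup ∧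
  ∃ c : List V, IsCycleOf K C c ∧ ∃ a : V, c.head? = some a ∧
    (p ++ p'.reverse.tail = c ++ [a] ∨ p' ++ p.reverse.tail = c ++ [a])

/-- Elementary moves of paths: an edge move (deleting a back-and-forth along an
edge) and a 2-cell move (replacing an arc of a 2-cell component by the
complementary arc). -/
inductive Move (K : Precc V) : List V → List V → Prop where
  | edgeDel (a b : List V) (u w : V) (h : K.EdgeRel u w) :
      Move K (a ++ u :: w :: u :: b) (a ++ u :: b)
  | cellMove (a b p p' : List V) (C : Finset V)
      (hC : K.IsComponentOfTwoCell C) (harc : K.ComplementaryArcs C p p') :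
      Move K (a ++ p ++ b) (a ++ p' ++ b)

/-- Homotopy of paths: generated by finitely many moves (and their inverses). -/
def Homotopic (K : Precc V) (p q : List V) : Prop :=
  Relation.ReflTransGen (fun l l' => Move K l l' ∨ Move K l' l) p q

/-- Monodromy-freedom: the holonomy of the connection around the boundary loop
of any connected component of a 2-cell is the identity on the incident edges. -/
def MonodromyFree (K : Precc V) : Prop :=
  ∀ C : Finset V, K.IsComponentOfTwoCell C → ∀ c : List V, K.IsCycleOf C c →
    ∀ a : V, c.head? = some a →
      ∀ e f : Finset V, e ∈ K.cells → K.rk e = 1 → e ∩ C = {a} →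
        Transport K (c ++ [a]) e f → f = e

/-- Evenness: every connected component of every 2-cell has an even number of
vertices. -/
def EvenCC (K : Precc V) : Prop :=
  ∀ C : Finset V, K.IsComponentOfTwoCell C → Even C.card

/-- The collar of a vertex set `A` in `K`: cells meeting `A` properly. -/
noncomputable def collarCells (K : Precc V) (A : Finset V) : Finset (Finset V) :=
  K.cells.filter fun x => (x ∩ A).Nonempty ∧ ¬ x ⊆ A

/-- The set `E^x_A` of edges of `x` with exactly one vertex in `A`. -/
noncomputable def edgeCollar (K : Precc V) (A : Finset V) (x : Finset V) : Finset (Finset V) :=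
  K.cells.filter fun e => K.rk e = 1 ∧ e ⊆ x ∧ (e ∩ A).card = 1

/-- The `∼`-dual of a cell: the union of its dual in `K` and its dual in `∂K`. -/
noncomputable def bdualSet (K : Precc V) (x : Finset V) : Finset (Finset V) :=
  K.dualSet x ∪ (K.boundary.cells.filter fun y => K.rk y + 1 = K.Rk ∧ x ⊆ y)

/-- `J` is a (possibly empty) union of connected components of `K`. -/
def IsUnionOfComponents (K J : Precc V) : Prop :=
  ∃ W : Finset V, W ⊆ K.vertices ∧
    (∀ a ∈ W, ∀ b : V, Relation.ReflTransGen K.EdgeRel a b → b ∈ W) ∧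
    J.cells = K.cells.filter fun x => x ⊆ W

/-- `g` is the greatest lower bound of `S` among the cells of `K`. -/
def IsMeetOf (K : Precc V) (S : Finset (Finset V)) (g : Finset V) : Prop :=
  g ∈ K.cells ∧ (∀ s ∈ S, g ⊆ s) ∧ ∀ b ∈ K.cells, (∀ s ∈ S, b ⊆ s) → b ⊆ g

/-- `g` is the least upper bound of `S` among the cells of `K`. -/
def IsJoinOf (K : Precc V) (S : Finset (Finset V)) (g : Finset V) : Prop :=
  g ∈ K.cells ∧ (∀ s ∈ S, s ⊆ g) ∧ ∀ b ∈ K.cells, (∀ s ∈ S, s ⊆ b) → g ⊆ b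

/-- A reduction `ρ : J → K` (so that `J` is a subdivision of `K`). -/
def IsReduction (J K : Precc V) (ρ : Finset V → Finset V) : Prop :=
  (∀ x ∈ J.cells, ρ x ∈ K.cells) ∧
  (∀ y ∈ K.cells, ∃ x ∈ J.cells, ρ x = y) ∧
  (∀ x ∈ J.cells, ∀ y ∈ J.cells, x ⊆ y → ρ x ⊆ ρ y) ∧
  (∀ x ∈ J.cells, ∀ y ∈ J.cells, K.rk (ρ x) = 0 → ρ x = ρ y → x = y) ∧
  (∀ x ∈ J.cells, ∀ g : Finset V, IsMeetOf J (J.cface x) g →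
    ∀ h : Finset V, IsMeetOf K ((J.cface x).image ρ) h → ρ g = h) ∧
  (∀ x ∈ J.cells, ∀ y ∈ K.cells, ρ x ⊆ y →
    ∃ w ∈ J.cells, x ⊆ w ∧ J.rk w = K.rk y ∧ ρ w = y) ∧
  (∀ x ∈ J.cells, J.rk x + 1 = K.rk (ρ x) →
    ((J.cface x).filter fun w => ρ w = ρ x).card = 2) ∧
  (∀ x ∈ J.cells, J.rk x = K.rk (ρ x) →
    ∀ y ∈ K.cface (ρ x), ((J.cface x).filter fun w => ρ w = y).card = 1)

/-- A collapse `π : J → K` (so that `J` is an expansion of `K`). -/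
def IsCollapse (J K : Precc V) (π : Finset V → Finset V) : Prop :=
  (∀ x ∈ J.cells, π x ∈ K.cells) ∧
  (∀ y ∈ K.cells, ∃ x ∈ J.cells, π x = y) ∧
  (∀ x ∈ J.cells, ∀ y ∈ J.cells, x ⊆ y → π x ⊆ π y) ∧
  (∀ x ∈ J.cells, ∀ y ∈ J.cells, (∀ z ∈ K.cells, ¬ π x ⊂ z) → π x = π y → x = y) ∧
  (∀ x ∈ J.cells, 1 ≤ J.rk x → IsJoinOf K ((J.face x).image π) (π x)) ∧
  (∀ x ∈ J.cells, ∀ y ∈ K.cells, y ⊆ π x →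
    ∃ w ∈ J.cells, w ⊆ x ∧ J.rk w = K.rk y ∧ π w = y) ∧
  (∀ x ∈ J.cells, K.rk (π x) + 1 = J.rk x →
    ((J.face x).filter fun w => π w = π x).card = 2) ∧
  (∀ x ∈ J.cells, J.rk x = K.rk (π x) →
    ∀ y ∈ K.face (π x), ((J.face x).filter fun w => π w = y).card = 1)

/-- The domain `E_a^{dual b}` of the connection `∇^a_b`: edges at `a` lying in
a common 2-cell with the edge `{a,b}`. -/
noncomputable def connDomain (K : Precc V) (a b : V) : Finset (Finset V) :=
  (K.EdgesAt a).filter fun e =>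
    ∃ C ∈ K.cells, K.rk C = 2 ∧ e ⊆ C ∧ ({a, b} : Finset V) ⊆ C

end Precc

namespace Precc

variable {V : Type u} [DecidableEq V] [Fintype V]

section Statement9Aux

variable {V : Type u} [DecidableEq V] [Fintype V] {K : Precc V}

lemma mem_EdgesAt' {a : V} {e : Finset V} :
    e ∈ K.EdgesAt a ↔ e ∈ K.cells ∧ K.rk e = 1 ∧ a ∈ e := by
  simp [EdgesAt, and_assoc]

lemma mem_edgesIn' {a : V} {x e : Finset V} :
    e ∈ K.edgesIn a x ↔ e ∈ K.cells ∧ K.rk e = 1 ∧ a ∈ e ∧ e ⊆ x := by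
  simp [edgesIn, mem_EdgesAt', and_assoc]

lemma mem_dualSet' {y z : Finset V} :
    z ∈ K.dualSet y ↔ z ∈ K.cells ∧ K.rk z = K.Rk ∧ y ⊆ z := by
  simp [dualSet, cellsOfRank, and_assoc]

lemma edgesIn_subset_EdgesAt (a : V) (x : Finset V) : K.edgesIn a x ⊆ K.EdgesAt a :=
  Finset.filter_subset _ _

lemma edgesIn_mono {a : V} {x y : Finset V} (h : x ⊆ y) :
    K.edgesIn a x ⊆ K.edgesIn a y := by
  intro e he
  rw [mem_edgesIn'] at he ⊢
  exact ⟨he.1, he.2.1, he.2.2.1, he.2.2.2.trans h⟩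

lemma edgesIn_inter (a : V) (x y : Finset V) :
    K.edgesIn a (x ∩ y) = K.edgesIn a x ∩ K.edgesIn a y := by
  ext e
  simp only [Finset.mem_inter, mem_edgesIn', Finset.subset_inter_iff]
  tauto

lemma rk_le_Rk {x : Finset V} (hx : x ∈ K.cells) : K.rk x ≤ K.Rk :=
  Finset.le_sup hx

lemma rk_mono (hK : K.IsCC) {x y : Finset V} (hx : x ∈ K.cells) (hy : y ∈ K.cells)
    (h : x ⊆ y) : K.rk x ≤ K.rk y := by
  rcases eq_or_ne x y with rfl | hne
  · exact le_rfl
  · exact (hK.2.2.2.1 x hx y hy (Finset.ssubset_iff_subset_ne.mpr ⟨h, hne⟩)).le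

lemma rk_singleton (hK : K.IsCC) {a : V} (ha : ({a} : Finset V) ∈ K.cells) :
    K.rk {a} = 0 :=
  (hK.2.2.1 _ ha).mpr (Finset.card_singleton a)

/-- Chain lemma: inside any cell containing `a` there are cells of every
smaller rank containing `a`. -/
lemma exists_subcell (hK : K.IsCC) {x : Finset V} {a : V} (hx : x ∈ K.cells)
    (ha : a ∈ x) : ∀ i, i ≤ K.rk x → ∃ y ∈ K.cells, a ∈ y ∧ y ⊆ x ∧ K.rk y = i := by
  intro i
  induction i with
  | zero =>
    intro _
    have h1 : ({a} : Finset V) ∈ K.cells := hK.2.1 x hx a ha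
    exact ⟨{a}, h1, Finset.mem_singleton_self a, Finset.singleton_subset_iff.mpr ha,
      rk_singleton hK h1⟩
  | succ i ih =>
    intro hi
    obtain ⟨y, hy, hay, hyx, hry⟩ := ih (Nat.le_of_succ_le hi)
    have hne : y ≠ x := by rintro rfl; omega
    obtain ⟨z, hz, hyz, hzx, hrz⟩ :=
      hK.2.2.2.2.2.1 y hy x hx (Finset.ssubset_iff_subset_ne.mpr ⟨hyx, hne⟩)
    exact ⟨z, hz, (Finset.ssubset_iff_subset_ne.mp hyz).1 hay, hzx, by omega⟩

/-- Every cell is contained in a maximal cell. -/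
lemma exists_maximal_supercell (hK : K.IsCC) {x : Finset V} (hx : x ∈ K.cells) :
    ∃ z ∈ K.cells, x ⊆ z ∧ ∀ w ∈ K.cells, ¬ z ⊂ w := by
  obtain ⟨m, hm, hmax⟩ : ∃ m ∈ (K.cells.filter fun w => x ⊆ w),
      ∀ w ∈ (K.cells.filter fun w => x ⊆ w), ¬ m < w := by
    obtain ⟨m, hm⟩ := Finset.exists_maximal (s := K.cells.filter fun w => x ⊆ w)
      ⟨x, Finset.mem_filter.mpr ⟨hx, Finset.Subset.refl x⟩⟩
    exact ⟨m, hm.1, fun w hw hlt => hlt.not_ge (hm.2 hw hlt.le)⟩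
  rw [Finset.mem_filter] at hm
  refine ⟨m, hm.1, hm.2, fun w hw hmw => ?_⟩
  exact hmax w (Finset.mem_filter.mpr ⟨hw, hm.2.trans hmw.subset⟩) hmw

lemma edgesIn_self_edge (hgb : K.GraphBased) {a : V} {e : Finset V}
    (he : e ∈ K.cells) (hre : K.rk e = 1) (hae : a ∈ e) :
    K.edgesIn a e = {e} := by
  ext f
  simp only [mem_edgesIn', Finset.mem_singleton]
  constructor
  · rintro ⟨hf, hrf, -, hfe⟩
    exact Finset.eq_of_subset_of_card_le hfe (by rw [hgb e he hre, hgb f hf hrf])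
  · rintro rfl
    exact ⟨he, hre, hae, Finset.Subset.refl _⟩

/-- Existence of a cell with a prescribed edge set at a vertex. -/
lemma exists_cell_edges (hgb : K.GraphBased) (hfull : K.RFull K.Rk) {a : V}
    (ha : ({a} : Finset V) ∈ K.cells) {j : ℕ} (h1 : 1 ≤ j) (hjR : j ≤ K.Rk)
    {S : Finset (Finset V)} (hS : S ⊆ K.EdgesAt a) (hc : S.card = j) :
    ∃ x ∈ K.cells, a ∈ x ∧ K.rk x = j ∧ K.edgesIn a x = S := by
  rcases eq_or_lt_of_le h1 with h1' | h2
  · obtain ⟨e, rfl⟩ := Finset.card_eq_one.mp (hc.trans h1'.symm)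
    have he := mem_EdgesAt'.mp (hS (Finset.mem_singleton_self e))
    exact ⟨e, he.1, he.2.2, by omega, edgesIn_self_edge hgb he.1 he.2.1 he.2.2⟩
  · obtain ⟨x, hx, hrx, hex⟩ := hfull a ha j h2 hjR S hS hc
    have hSne : S.Nonempty := Finset.card_pos.mp (by omega)
    obtain ⟨e, heS⟩ := hSne
    have he' : e ∈ K.edgesIn a x := hex ▸ heS
    rw [mem_edgesIn'] at he'
    exact ⟨x, hx, he'.2.2.2 he'.2.2.1, hrx, hex⟩

/-- Key containment lemma: if the edges of `z` at `a` are among those of `x`,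
then `z ⊆ x`, assuming the edge-count formula for cells inside `z`. -/
lemma subset_of_edgesIn_subset (hK : K.IsCC) {a : V} {x z : Finset V}
    (hx : x ∈ K.cells) (hz : z ∈ K.cells) (hax : a ∈ x) (haz : a ∈ z)
    (hcard : ∀ w ∈ K.cells, a ∈ w → w ⊆ z → (K.edgesIn a w).card = K.rk w)
    (hsub : K.edgesIn a z ⊆ K.edgesIn a x) : z ⊆ x := by
  have hne : z ∩ x ≠ ∅ := by
    intro h
    have : a ∈ z ∩ x := Finset.mem_inter.mpr ⟨haz, hax⟩
    simp [h] at this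
  have hw : z ∩ x ∈ K.cells := (hK.2.2.2.2.1 z hz x hx).resolve_left hne
  have hEw : K.edgesIn a (z ∩ x) = K.edgesIn a z := by
    rw [edgesIn_inter, Finset.inter_eq_left.mpr hsub]
  have h1 : (K.edgesIn a (z ∩ x)).card = K.rk (z ∩ x) :=
    hcard _ hw (Finset.mem_inter.mpr ⟨haz, hax⟩) (Finset.inter_subset_left)
  have h2 : (K.edgesIn a z).card = K.rk z := hcard z hz haz (Finset.Subset.refl z)
  rw [hEw] at h1
  have heq : z ∩ x = z := by
    by_contra hne'
    have : z ∩ x ⊂ z := Finset.ssubset_iff_subset_ne.mpr ⟨Finset.inter_subset_left, hne'⟩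
    have := hK.2.2.2.1 _ hw z hz this
    omega
  rw [← heq]
  exact Finset.inter_subset_right

/-- Counting supersets of `E` of cardinality `E.card + 1` inside `S`. -/
lemma card_filter_superset {α : Type*} [DecidableEq α] {E S : Finset α} (hES : E ⊆ S) :
    ((S.powerset.filter fun T => E ⊆ T ∧ T.card = E.card + 1)).card = (S \ E).card := by
  have himg : S.powerset.filter (fun T => E ⊆ T ∧ T.card = E.card + 1)
      = (S \ E).image (fun e => insert e E) := by
    ext T
    simp only [Finset.mem_filter, Finset.mem_powerset, Finset.mem_image, Finset.mem_sdiff]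
    constructor
    · rintro ⟨hTS, hET, hTc⟩
      have : ∃ e ∈ T, e ∉ E := by
        by_contra h
        push_neg at h
        have : T ⊆ E := h
        have := Finset.card_le_card this
        omega
      obtain ⟨e, heT, heE⟩ := this
      refine ⟨e, ⟨hTS heT, heE⟩, ?_⟩
      have hins : insert e E ⊆ T := Finset.insert_subset heT hET
      have hcard : T.card ≤ (insert e E).card := by
        rw [Finset.card_insert_of_notMem heE]; omega
      exact (Finset.eq_of_subset_of_card_le hins hcard)
    · rintro ⟨e, ⟨heS, heE⟩, rfl⟩
      exact ⟨Finset.insert_subset heS hES, Finset.subset_insert e E,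
        Finset.card_insert_of_notMem heE⟩
  rw [himg, Finset.card_image_of_injOn]
  intro e he f hf hef
  simp only [Finset.coe_sdiff, Set.mem_diff, Finset.mem_coe] at he hf
  have hef' : insert e E = insert f E := hef
  have : e ∈ insert f E := by rw [← hef']; exact Finset.mem_insert_self e E
  rcases Finset.mem_insert.mp this with h | h
  · exact h
  · exact absurd h he.2

/-- **Main counting lemma**: in a graph-based `Rk`-full cc, a cell of rank `r`
containing a vertex `a` contains exactly `r` edges at `a`. -/
lemma card_edgesIn (hK : K.IsCC) (hgb : K.GraphBased) (hfull : K.RFull K.Rk) :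
    ∀ r (x : Finset V) (a : V), x ∈ K.cells → a ∈ x → K.rk x = r →
      (K.edgesIn a x).card = r := by
  intro r
  induction r using Nat.strong_induction_on with
  | _ r IH =>
  intro x a hx hax hrx
  match r, hrx with
  | 0, hrx =>
    rw [Finset.card_eq_zero, Finset.eq_empty_iff_forall_notMem]
    intro e he
    rw [mem_edgesIn'] at he
    have h2 : e.card = 2 := hgb e he.1 he.2.1
    have h1 : x.card = 1 := (hK.2.2.1 x hx).mp hrx
    have := Finset.card_le_card he.2.2.2
    omega
  | 1, hrx => rw [edgesIn_self_edge hgb hx hrx hax]; exact Finset.card_singleton x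
  | (j+2), hrx =>
    -- the sub-cell y of rank j
    obtain ⟨y, hy, hay, hyx, hry⟩ := exists_subcell hK hx hax j (by omega)
    have hEy : (K.edgesIn a y).card = j := IH j (by omega) y a hy hay hry
    -- diamond
    obtain ⟨z₁, hz₁, z₂, hz₂, hzne, hchar⟩ :=
      hK.2.2.2.2.2.2 y hy x hx hyx (by omega)
    have hz₁p := (hchar z₁ hz₁).mpr (Or.inl rfl)
    have hz₂p := (hchar z₂ hz₂).mpr (Or.inr rfl)
    -- helper: the edge-count formula below rank j+2
    have hbelow : ∀ z ∈ K.cells, K.rk z ≤ j + 1 →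
        ∀ w ∈ K.cells, a ∈ w → w ⊆ z → (K.edgesIn a w).card = K.rk w := by
      intro z hzc hzr w hw haw hwz
      have : K.rk w ≤ K.rk z := rk_mono hK hw hzc hwz
      exact IH (K.rk w) (by omega) w a hw haw rfl
    have hSUB : ∀ z ∈ K.cells, ∀ x' ∈ K.cells, a ∈ z → a ∈ x' → K.rk z ≤ j + 1 →
        K.edgesIn a z ⊆ K.edgesIn a x' → z ⊆ x' := by
      intro z hzc x' hx' haz hax' hzr hs
      exact subset_of_edgesIn_subset hK hx' hzc hax' haz (hbelow z hzc hzr) hs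
    set S := K.edgesIn a x with hSdef
    set Ey := K.edgesIn a y with hEydef
    have hEyS : Ey ⊆ S := edgesIn_mono hyx
    set Tset := S.powerset.filter (fun T => Ey ⊆ T ∧ T.card = Ey.card + 1) with hTdef
    have haz₁ : a ∈ z₁ := hz₁p.1 hay
    have haz₂ : a ∈ z₂ := hz₂p.1 hay
    have hrz₁ : K.rk z₁ = j + 1 := by omega
    have hrz₂ : K.rk z₂ = j + 1 := by omega
    have hcz₁ : (K.edgesIn a z₁).card = j + 1 := IH (j+1) (by omega) z₁ a hz₁ haz₁ hrz₁
    have hcz₂ : (K.edgesIn a z₂).card = j + 1 := IH (j+1) (by omega) z₂ a hz₂ haz₂ hrz₂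
    have hmemT : ∀ z ∈ K.cells, a ∈ z → y ⊆ z → z ⊆ x → K.rk z = j + 1 →
        K.edgesIn a z ∈ Tset := by
      intro z hzc haz hyz hzx hrz
      rw [hTdef, Finset.mem_filter, Finset.mem_powerset]
      exact ⟨edgesIn_mono hzx, edgesIn_mono hyz,
        by rw [IH (j+1) (by omega) z a hzc haz hrz, hEy]⟩
    have hTeq : Tset = {K.edgesIn a z₁, K.edgesIn a z₂} := by
      ext T
      constructor
      · intro hT
        rw [hTdef, Finset.mem_filter, Finset.mem_powerset] at hT
        obtain ⟨hTS, hEyT, hTc⟩ := hT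
        have hTA : T ⊆ K.EdgesAt a := hTS.trans (edgesIn_subset_EdgesAt a x)
        have hjR : j + 1 ≤ K.Rk := by
          have := rk_le_Rk hx; omega
        obtain ⟨zT, hzT, hazT, hrzT, hezT⟩ := exists_cell_edges hgb hfull
          (hK.2.1 x hx a hax) (by omega) hjR hTA (by omega)
        have hyzT : y ⊆ zT := hSUB y hy zT hzT hay hazT (by omega)
          (by rw [hezT]; exact hEyT)
        have hzTx : zT ⊆ x := hSUB zT hzT x hx hazT hax (by omega)
          (by rw [hezT]; exact hTS)
        rcases (hchar zT hzT).mp ⟨hyzT, hzTx, by omega⟩ with rfl | rfl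
        · rw [← hezT]; exact Finset.mem_insert_self _ _
        · rw [← hezT]; simp
      · intro hT
        rcases Finset.mem_insert.mp hT with rfl | hT
        · exact hmemT z₁ hz₁ haz₁ hz₁p.1 hz₁p.2.1 hrz₁
        · rw [Finset.mem_singleton] at hT
          rw [hT]
          exact hmemT z₂ hz₂ haz₂ hz₂p.1 hz₂p.2.1 hrz₂
    have hEne : K.edgesIn a z₁ ≠ K.edgesIn a z₂ := by
      intro h
      apply hzne
      have h12 : z₁ ⊆ z₂ := hSUB z₁ hz₁ z₂ hz₂ haz₁ haz₂ (by omega) (h ▸ Finset.Subset.refl _)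
      have h21 : z₂ ⊆ z₁ := hSUB z₂ hz₂ z₁ hz₁ haz₂ haz₁ (by omega) (h ▸ Finset.Subset.refl _)
      exact Finset.Subset.antisymm h12 h21
    have hTcard : Tset.card = 2 := by
      rw [hTeq, Finset.card_insert_of_notMem (by simpa using hEne), Finset.card_singleton]
    have := card_filter_superset hEyS
    rw [← hTdef] at this
    have hsd : (S \ Ey).card + Ey.card = S.card := Finset.card_sdiff_add_card_eq_card hEyS
    omega

/-- Counting the maximal cells containing a sub-maximal cell. -/
lemma card_dualSet_eq (hK : K.IsCC) (hgb : K.GraphBased) (hfull : K.RFull K.Rk)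
    {y : Finset V} {a : V} (hy : y ∈ K.cells) (hay : a ∈ y) (hr : K.rk y + 1 = K.Rk) :
    (K.dualSet y).card = (K.EdgesAt a \ K.edgesIn a y).card := by
  have hA : ∀ x ∈ K.cells, ∀ b ∈ x, (K.edgesIn b x).card = K.rk x :=
    fun x hx b hb => card_edgesIn hK hgb hfull (K.rk x) x b hx hb rfl
  have hSUB : ∀ z ∈ K.cells, ∀ x' ∈ K.cells, a ∈ z → a ∈ x' →
      K.edgesIn a z ⊆ K.edgesIn a x' → z ⊆ x' := by
    intro z hzc x' hx' haz hax' hs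
    exact subset_of_edgesIn_subset hK hx' hzc hax' haz
      (fun w hw haw _ => hA w hw a haw) hs
  set Ey := K.edgesIn a y with hEydef
  have hcEy : Ey.card = K.rk y := hA y hy a hay
  have hEyA : Ey ⊆ K.EdgesAt a := edgesIn_subset_EdgesAt a y
  set Tset := (K.EdgesAt a).powerset.filter (fun T => Ey ⊆ T ∧ T.card = Ey.card + 1)
    with hTdef
  have himg : (K.dualSet y).image (K.edgesIn a) = Tset := by
    ext T
    simp only [Finset.mem_image]
    constructor
    · rintro ⟨z, hz, rfl⟩
      rw [mem_dualSet'] at hz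
      have haz : a ∈ z := hz.2.2 hay
      rw [hTdef, Finset.mem_filter, Finset.mem_powerset]
      refine ⟨edgesIn_subset_EdgesAt a z, edgesIn_mono hz.2.2, ?_⟩
      rw [hA z hz.1 a haz, hz.2.1, hcEy]
      omega
    · intro hT
      rw [hTdef, Finset.mem_filter, Finset.mem_powerset] at hT
      obtain ⟨hTA, hEyT, hTc⟩ := hT
      have hTcard : T.card = K.Rk := by omega
      obtain ⟨zT, hzT, hazT, hrzT, hezT⟩ := exists_cell_edges hgb hfull
        (hK.2.1 y hy a hay) (by omega) (le_refl _) hTA hTcard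
      have hyzT : y ⊆ zT := hSUB y hy zT hzT hay hazT (by rw [hezT]; exact hEyT)
      exact ⟨zT, mem_dualSet'.mpr ⟨hzT, hrzT, hyzT⟩, hezT⟩
  have hinj : Set.InjOn (K.edgesIn a) ↑(K.dualSet y) := by
    intro z hz z' hz' heq
    rw [Finset.mem_coe, mem_dualSet'] at hz hz'
    have haz : a ∈ z := hz.2.2 hay
    have haz' : a ∈ z' := hz'.2.2 hay
    exact Finset.Subset.antisymm
      (hSUB z hz.1 z' hz'.1 haz haz' (heq ▸ Finset.Subset.refl _))
      (hSUB z' hz'.1 z hz.1 haz' haz (heq ▸ Finset.Subset.refl _))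
  calc (K.dualSet y).card = ((K.dualSet y).image (K.edgesIn a)).card :=
        (Finset.card_image_of_injOn hinj).symm
    _ = Tset.card := by rw [himg]
    _ = (K.EdgesAt a \ Ey).card := by rw [hTdef]; exact card_filter_superset hEyA

end Statement9Aux

/-- A connected `R`-full cc of rank `R` is closed iff it is
graph-based and `(R+1)`-regular. -/
theorem statement_9 (K : Precc V) (hK : K.IsCC) (hR : 2 ≤ K.Rk)
    (hconn : K.Connected) (hfull : K.RFull K.Rk) :
    K.Closed ↔ (K.GraphBased ∧ K.Regular (K.Rk + 1)) := by
  have hgb : K.GraphBased := hconn.1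
  have hA : ∀ x ∈ K.cells, ∀ b ∈ x, (K.edgesIn b x).card = K.rk x :=
    fun x hx b hb => card_edgesIn hK hgb hfull (K.rk x) x b hx hb rfl
  constructor
  · rintro ⟨hns, hcl⟩
    refine ⟨hgb, fun a hav => ?_⟩
    have ha : ({a} : Finset V) ∈ K.cells := by
      simpa [vertices] using hav
    -- find a maximal cell containing a; it has rank Rk by purity
    obtain ⟨z, hz, haz, hzmax⟩ := exists_maximal_supercell hK ha
    have hrz : K.rk z = K.Rk := hns.2.1 z hz hzmax
    have haz' : a ∈ z := haz (Finset.mem_singleton_self a)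
    -- sub-maximal cell y containing a
    obtain ⟨y, hy, hay, hyz, hry⟩ := exists_subcell hK hz haz' (K.Rk - 1) (by omega)
    have hry1 : K.rk y + 1 = K.Rk := by omega
    have hd2 : (K.dualSet y).card = 2 := hcl y hy hry1
    have := card_dualSet_eq hK hgb hfull hy hay hry1
    have hEyA : K.edgesIn a y ⊆ K.EdgesAt a := edgesIn_subset_EdgesAt a y
    have hsd := Finset.card_sdiff_add_card_eq_card hEyA
    have hcEy : (K.edgesIn a y).card = K.rk y := hA y hy a hay
    omega
  · rintro ⟨-, hreg⟩
    have hdeg : ∀ x ∈ K.cells, ∀ b ∈ x, (K.EdgesAt b).card = K.Rk + 1 := by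
      intro x hx b hb
      exact hreg b (Finset.mem_filter.mpr ⟨Finset.mem_univ b, hK.2.1 x hx b hb⟩)
    have hSUB : ∀ z ∈ K.cells, ∀ x' ∈ K.cells, ∀ a : V, a ∈ z → a ∈ x' →
        K.edgesIn a z ⊆ K.edgesIn a x' → z ⊆ x' := by
      intro z hzc x' hx' a haz hax' hs
      exact subset_of_edgesIn_subset hK hx' hzc hax' haz
        (fun w hw haw _ => hA w hw a haw) hs
    -- purity
    have hpure : K.Pure := by
      intro x hx hmax
      by_contra hne
      have hrxR : K.rk x < K.Rk := lt_of_le_of_ne (rk_le_Rk hx) hne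
      obtain ⟨a, hax⟩ := hK.1 x hx
      have hEx : (K.edgesIn a x).card = K.rk x := hA x hx a hax
      set n := max 2 (K.rk x + 1) with hn
      have hnR : n ≤ K.Rk := by omega
      obtain ⟨S, hExS, hSA, hScard⟩ := Finset.exists_subsuperset_card_eq (n := n)
        (edgesIn_subset_EdgesAt (K := K) a x) (by omega) (by rw [hdeg x hx a hax]; omega)
      obtain ⟨x', hx', hax', hrx', hex'⟩ := exists_cell_edges hgb hfull
        (hK.2.1 x hx a hax) (by omega) hnR hSA hScard
      have hxx' : x ⊆ x' := hSUB x hx x' hx' a hax hax' (by rw [hex']; exact hExS)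
      have hxne : x ≠ x' := by rintro rfl; omega
      exact hmax x' hx' (Finset.ssubset_iff_subset_ne.mpr ⟨hxx', hxne⟩)
    have hcnt : ∀ y ∈ K.cells, K.rk y + 1 = K.Rk → (K.dualSet y).card = 2 := by
      intro y hy hry
      obtain ⟨a, hay⟩ := hK.1 y hy
      rw [card_dualSet_eq hK hgb hfull hy hay hry]
      have hEyA : K.edgesIn a y ⊆ K.EdgesAt a := edgesIn_subset_EdgesAt a y
      have hsd := Finset.card_sdiff_add_card_eq_card hEyA
      have hcEy : (K.edgesIn a y).card = K.rk y := hA y hy a hay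
      have := hdeg y hy a hay
      omega
    exact ⟨⟨hgb, hpure, fun y hy hry => (hcnt y hy hry).le⟩, hcnt⟩

end Precc
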